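/- Let δ_1, …, δ_p be real numbers, not all equal, and let φ be the standard normal density. Then the function λ ↦ (∑_{j=1}^p δ_j³ φ(λ − δ_j)) / (∑_{j=1}^p δ_j² φ(λ − δ_j)) minus (∑_{j=1}^p δ_j φ(λ − δ_j)) / (∑_{j=1}^p φ(λ − δ_j)) is strictly positive for all λ ∈ ℝ, assuming all δ_j > 0. -/
import Mathlib


open Real

lemma key_ineq (p : ℕ) (δ w : Fin p → ℝ) (hw : ∀ j, 0 < w j) (hδ : ∀ j, 0 < δ j)
    (hne : ∃ i j, δ i ≠ δ j) :
    (∑ j, δ j * w j) * (∑ j, δ j ^ 2 * w j) < (∑ j, δ j ^ 3 * w j) * (∑ j, w j) := by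
  obtain ⟨i0, j0, hij⟩ := hne
  set F : Fin p → Fin p → ℝ := fun i j => w i * w j * (δ i ^ 3 - δ i * δ j ^ 2) with hF
  have hdiff : (∑ j, δ j ^ 3 * w j) * (∑ j, w j) - (∑ j, δ j * w j) * (∑ j, δ j ^ 2 * w j)
      = ∑ i, ∑ j, F i j := by
    rw [Finset.sum_mul_sum, Finset.sum_mul_sum, ← Finset.sum_sub_distrib]
    refine Finset.sum_congr rfl fun i _ => ?_
    rw [← Finset.sum_sub_distrib]
    refine Finset.sum_congr rfl fun j _ => ?_
    simp only [hF]; ring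
  have hswap : (∑ i, ∑ j, F j i) = ∑ i, ∑ j, F i j := Finset.sum_comm
  have hsym : (∑ i, ∑ j, F i j)
      = ∑ i, ∑ j, w i * w j * ((δ i + δ j) * (δ i - δ j) ^ 2) / 2 := by
    have : (∑ i, ∑ j, F i j) = ((∑ i, ∑ j, F i j) + (∑ i, ∑ j, F j i)) / 2 := by
      rw [hswap]; ring
    rw [this, ← Finset.sum_add_distrib, Finset.sum_div]
    refine Finset.sum_congr rfl fun i _ => ?_
    rw [← Finset.sum_add_distrib, Finset.sum_div]
    refine Finset.sum_congr rfl fun j _ => ?_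
    simp only [hF]; ring
  have hpos : 0 < ∑ i, ∑ j, w i * w j * ((δ i + δ j) * (δ i - δ j) ^ 2) / 2 := by
    have hterm : ∀ i j : Fin p, 0 ≤ w i * w j * ((δ i + δ j) * (δ i - δ j) ^ 2) / 2 := by
      intro i j
      apply div_nonneg _ (by norm_num)
      exact mul_nonneg (mul_pos (hw i) (hw j)).le
        (mul_nonneg (by linarith [hδ i, hδ j]) (sq_nonneg _))
    have h0 : (0 : ℝ) = ∑ i : Fin p, (0 : ℝ) := by simp
    rw [h0]
    refine Finset.sum_lt_sum (fun i _ => Finset.sum_nonneg fun j _ => hterm i j) ⟨i0, Finset.mem_univ _, ?_⟩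
    have h0' : (0 : ℝ) = ∑ j : Fin p, (0 : ℝ) := by simp
    rw [h0']
    refine Finset.sum_lt_sum (fun j _ => hterm i0 j) ⟨j0, Finset.mem_univ _, ?_⟩
    have hsq : 0 < (δ i0 - δ j0) ^ 2 :=
      lt_of_le_of_ne (sq_nonneg _) (Ne.symm (pow_ne_zero 2 (sub_ne_zero.mpr hij)))
    exact div_pos (mul_pos (mul_pos (hw i0) (hw j0))
      (mul_pos (by linarith [hδ i0, hδ j0]) hsq)) (by norm_num)
  linarith [hdiff, hsym, hpos]

theorem stmt_13 (p : ℕ) (δ : Fin p → ℝ) (hpos : ∀ j, 0 < δ j)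
    (hne : ∃ i j, δ i ≠ δ j) :
    ∀ l : ℝ,
      0 < (∑ j, δ j ^ 3 * ((Real.sqrt (2 * Real.pi))⁻¹ * Real.exp (-(l - δ j) ^ 2 / 2))) /
            (∑ j, δ j ^ 2 * ((Real.sqrt (2 * Real.pi))⁻¹ * Real.exp (-(l - δ j) ^ 2 / 2))) -
          (∑ j, δ j * ((Real.sqrt (2 * Real.pi))⁻¹ * Real.exp (-(l - δ j) ^ 2 / 2))) /
            (∑ j, (Real.sqrt (2 * Real.pi))⁻¹ * Real.exp (-(l - δ j) ^ 2 / 2)) := by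
  intro l
  set w : Fin p → ℝ := fun j => (Real.sqrt (2 * Real.pi))⁻¹ * Real.exp (-(l - δ j) ^ 2 / 2) with hw
  have hwpos : ∀ j, 0 < w j := fun j => by
    apply mul_pos (inv_pos.mpr (Real.sqrt_pos.mpr (by positivity))) (Real.exp_pos _)
  have hp : 0 < p := by
    obtain ⟨i, _, _⟩ := hne
    exact i.pos
  have hS0 : 0 < ∑ j, w j :=
    Finset.sum_pos (fun j _ => hwpos j) (Finset.univ_nonempty_iff.mpr ⟨⟨0, hp⟩⟩)
  have hS2 : 0 < ∑ j, δ j ^ 2 * w j :=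
    Finset.sum_pos (fun j _ => mul_pos (pow_pos (hpos j) 2) (hwpos j))
      (Finset.univ_nonempty_iff.mpr ⟨⟨0, hp⟩⟩)
  have hk := key_ineq p δ w hwpos hpos hne
  rw [sub_pos, div_lt_div_iff₀ hS0 hS2]
  linarith [hk]
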